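/- Let e₁, e₂, e₃ denote the standard basis of (ZMod 2)³. There exists a (unique) group homomorphism φ : W → (ZMod 2)³ with φ(s₁) = e₁, φ(s₂) = e₂, φ(s₃) = e₃ and φ(s₄) = e₁ + e₂ + e₃; this φ is surjective, and its kernel is isomorphic to ℤ × ℤ. -/

import Mathlib

/-- The Coxeter matrix of the 4-cycle: off-diagonal entries are `2` for cyclically adjacent
indices and `0` (i.e. `∞`) for the two opposite pairs. -/
def C4 : CoxeterMatrix (Fin 4) where
  M := Matrix.of fun i j : Fin 4 ↦
    if i = j then 1
    else if (i.val + 1) % 4 = j.val ∨ (j.val + 1) % 4 = i.val then 2 else 0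
  off_diagonal := by
    intro i i' h
    fin_cases i <;> fin_cases i' <;> simp_all [Matrix.of_apply]

/-- `W`, the right-angled Coxeter group of the 4-cycle. -/
abbrev W : Type := C4.Group

/-- The simple reflections `s₁, s₂, s₃, s₄` of `W`, indexed by `Fin 4`
(so `s 0 = s₁`, `s 1 = s₂`, `s 2 = s₃`, `s 3 = s₄`). -/
def s (i : Fin 4) : W := C4.simple i

/-- The standard basis vectors `e₁, e₂, e₃` of `(ZMod 2)³`. -/
def e1 : ZMod 2 × ZMod 2 × ZMod 2 := (1, 0, 0)
def e2 : ZMod 2 × ZMod 2 × ZMod 2 := (0, 1, 0)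
def e3 : ZMod 2 × ZMod 2 × ZMod 2 := (0, 0, 1)

open DihedralGroup
abbrev D := DihedralGroup 0
def cs : CoxeterSystem C4 W := C4.toCoxeterSystem
def fgen : Fin 4 → D × D := ![(sr 0, 1), (1, sr 0), (sr 1, 1), (1, sr 1)]
lemma fgen_liftable : C4.IsLiftable fgen := by
  intro i j
  fin_cases i <;> fin_cases j <;> decide
def θhom : W →* D × D := cs.lift ⟨fgen, fgen_liftable⟩
-- test ZMod 0 = ℤ defeq
def zi : ZMod 0 → ℤ := fun i => i
lemma zi_add (a b : ZMod 0) : zi (a + b) = zi a + zi b := rfl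
lemma zi_sub (a b : ZMod 0) : zi (a - b) = zi a - zi b := rfl
lemma zi_zero : zi 0 = 0 := rfl
lemma zi_one : zi 1 = 1 := rfl

lemma ss (i : Fin 4) : s i * s i = 1 := cs.simple_mul_simple_self i

lemma sComm {i j : Fin 4} (h : C4.M i j = 2) : Commute (s i) (s j) := by
  have hp := cs.simple_mul_simple_pow i j
  rw [h] at hp
  have h1 : (s i * s j) * (s j * s i) = 1 := by
    have := ss j
    calc (s i * s j) * (s j * s i) = s i * (s j * s j) * s i := by group
    _ = 1 := by rw [this, mul_one, ss i]
  have h2 : (s i * s j)⁻¹ = s j * s i := inv_eq_of_mul_eq_one_right h1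
  have h3 : (s i * s j)⁻¹ = s i * s j := by
    apply inv_eq_of_mul_eq_one_right
    rw [← sq]; exact hp
  unfold Commute SemiconjBy
  exact h3.symm.trans h2

lemma c01 : Commute (s 0) (s 1) := sComm (by decide)
lemma c03 : Commute (s 0) (s 3) := sComm (by decide)
lemma c21 : Commute (s 2) (s 1) := sComm (by decide)
lemma c23 : Commute (s 2) (s 3) := sComm (by decide)

def t1 : W := s 0 * s 2
def t2 : W := s 1 * s 3

lemma conj_t1 (k : ℤ) : s 0 * t1 ^ k = t1 ^ (-k) * s 0 := by
  have hconj : (MulAut.conj (s 0)) t1 = t1⁻¹ := by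
    simp only [MulAut.conj_apply, t1]
    have h0 : (s 0)⁻¹ = s 0 := inv_eq_of_mul_eq_one_right (ss 0)
    rw [h0, mul_inv_rev]
    have h2 : (s 2)⁻¹ = s 2 := inv_eq_of_mul_eq_one_right (ss 2)
    have h0' : (s 0)⁻¹ = s 0 := inv_eq_of_mul_eq_one_right (ss 0)
    rw [h2, h0']
    calc s 0 * (s 0 * s 2) * s 0 = (s 0 * s 0) * (s 2 * s 0) := by group
    _ = s 2 * s 0 := by rw [ss 0, one_mul]
  have : (MulAut.conj (s 0)) (t1 ^ k) = t1 ^ (-k) := by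
    rw [map_zpow, hconj, inv_zpow, ← zpow_neg]
  rw [MulAut.conj_apply] at this
  have h0 : (s 0)⁻¹ = s 0 := inv_eq_of_mul_eq_one_right (ss 0)
  rw [h0] at this
  calc s 0 * t1 ^ k = s 0 * t1 ^ k * s 0 * s 0 := by rw [mul_assoc, ss 0, mul_one]
  _ = t1 ^ (-k) * s 0 := by rw [this]

lemma conj_t2 (k : ℤ) : s 1 * t2 ^ k = t2 ^ (-k) * s 1 := by
  have hconj : (MulAut.conj (s 1)) t2 = t2⁻¹ := by
    simp only [MulAut.conj_apply, t2]
    have h1 : (s 1)⁻¹ = s 1 := inv_eq_of_mul_eq_one_right (ss 1)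
    have h3 : (s 3)⁻¹ = s 3 := inv_eq_of_mul_eq_one_right (ss 3)
    rw [mul_inv_rev, h1, h3]
    calc s 1 * (s 1 * s 3) * s 1 = (s 1 * s 1) * (s 3 * s 1) := by group
    _ = s 3 * s 1 := by rw [ss 1, one_mul]
  have : (MulAut.conj (s 1)) (t2 ^ k) = t2 ^ (-k) := by
    rw [map_zpow, hconj, inv_zpow, ← zpow_neg]
  rw [MulAut.conj_apply] at this
  have h1 : (s 1)⁻¹ = s 1 := inv_eq_of_mul_eq_one_right (ss 1)
  rw [h1] at this
  calc s 1 * t2 ^ k = s 1 * t2 ^ k * s 1 * s 1 := by rw [mul_assoc, ss 1, mul_one]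
  _ = t2 ^ (-k) * s 1 := by rw [this]

def χ1fun : D → W
  | r i => t1 ^ (zi i)
  | sr i => s 0 * t1 ^ (zi i)

def χ2fun : D → W
  | r i => t2 ^ (zi i)
  | sr i => s 1 * t2 ^ (zi i)

lemma χ1fun_mul (a b : D) : χ1fun (a * b) = χ1fun a * χ1fun b := by
  rcases a with i | i <;> rcases b with j | j <;>
    simp only [r_mul_r, r_mul_sr, sr_mul_r, sr_mul_sr, χ1fun, zi_add, zi_sub]
  · rw [zpow_add]
  · calc s 0 * t1 ^ (zi j - zi i) = s 0 * t1 ^ (-zi i) * t1 ^ zi j := by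
          rw [mul_assoc, ← zpow_add, show -zi i + zi j = zi j - zi i by ring]
      _ = t1 ^ zi i * s 0 * t1 ^ zi j := by rw [conj_t1, neg_neg]
      _ = t1 ^ zi i * (s 0 * t1 ^ zi j) := by rw [mul_assoc]
  · rw [zpow_add, mul_assoc]
  · rw [show s 0 * t1 ^ zi i = t1 ^ (-zi i) * s 0 from conj_t1 _, mul_assoc,
      ← mul_assoc (s 0), ss 0, one_mul, ← zpow_add,
      show -zi i + zi j = zi j - zi i by ring]
lemma χ2fun_mul (a b : D) : χ2fun (a * b) = χ2fun a * χ2fun b := by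
  rcases a with i | i <;> rcases b with j | j <;>
    simp only [r_mul_r, r_mul_sr, sr_mul_r, sr_mul_sr, χ2fun, zi_add, zi_sub]
  · rw [zpow_add]
  · calc s 1 * t2 ^ (zi j - zi i) = s 1 * t2 ^ (-zi i) * t2 ^ zi j := by
          rw [mul_assoc, ← zpow_add, show -zi i + zi j = zi j - zi i by ring]
      _ = t2 ^ zi i * s 1 * t2 ^ zi j := by rw [conj_t2, neg_neg]
      _ = t2 ^ zi i * (s 1 * t2 ^ zi j) := by rw [mul_assoc]
  · rw [zpow_add, mul_assoc]
  · rw [show s 1 * t2 ^ zi i = t2 ^ (-zi i) * s 1 from conj_t2 _, mul_assoc,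
      ← mul_assoc (s 1), ss 1, one_mul, ← zpow_add,
      show -zi i + zi j = zi j - zi i by ring]

def χ1 : D →* W := MonoidHom.mk' χ1fun χ1fun_mul
def χ2 : D →* W := MonoidHom.mk' χ2fun χ2fun_mul

lemma comm_χ (a b : D) : Commute (χ1 a) (χ2 b) := by
  have hs0 : ∀ b : D, Commute (s 0) (χ2 b) := by
    rintro (j | j)
    · exact (c01.mul_right c03).zpow_right _
    · exact c01.mul_right ((c01.mul_right c03).zpow_right _)
  have hs2 : ∀ b : D, Commute (s 2) (χ2 b) := by
    rintro (j | j)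
    · exact (c21.mul_right c23).zpow_right _
    · exact c21.mul_right ((c21.mul_right c23).zpow_right _)
  rcases a with i | i
  · exact ((hs0 b).mul_left (hs2 b)).zpow_left _
  · exact (hs0 b).mul_left (((hs0 b).mul_left (hs2 b)).zpow_left _)

def χ : D × D →* W := χ1.noncommCoprod χ2 comm_χ

lemma r_one_zpow (k : ℤ) : (r 1 : D) ^ k = r k := by
  cases k with
  | ofNat n =>
      rw [Int.ofNat_eq_coe, zpow_natCast, r_one_pow]
      rfl
  | negSucc n =>
      rw [zpow_negSucc, r_one_pow]
      rfl

lemma θ_s (i : Fin 4) : θhom (s i) = fgen i := cs.lift_apply_simple fgen_liftable i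

lemma θ_t1 (k : ℤ) : θhom (t1 ^ k) = (r k, 1) := by
  rw [map_zpow, t1, map_mul, θ_s, θ_s]
  show ((sr 0, 1) * (sr 1, 1) : D × D) ^ k = _
  have : ((sr 0, 1) * (sr 1, 1) : D × D) = (r 1, 1) := by decide
  rw [this, Prod.pow_def, one_zpow, _root_.r_one_zpow]

lemma θ_t2 (k : ℤ) : θhom (t2 ^ k) = (1, r k) := by
  rw [map_zpow, t2, map_mul, θ_s, θ_s]
  show ((1, sr 0) * (1, sr 1) : D × D) ^ k = _
  have : ((1, sr 0) * (1, sr 1) : D × D) = (1, r 1) := by decide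
  rw [this, Prod.pow_def, one_zpow, _root_.r_one_zpow]

lemma θχ : θhom.comp χ = MonoidHom.id (D × D) := by
  apply MonoidHom.ext
  rintro ⟨a, b⟩
  have hab : χ (a, b) = χ1 a * χ2 b := rfl
  rw [MonoidHom.comp_apply, hab, map_mul, MonoidHom.id_apply]
  have h1 : θhom (χ1 a) = (a, 1) := by
    rcases a with i | i
    · exact θ_t1 (zi i)
    · show θhom (s 0 * t1 ^ zi i) = _
      rw [map_mul, θ_s, θ_t1]
      show ((sr 0, 1) : D × D) * (r (zi i), 1) = _
      erw [Prod.mk_mul_mk, sr_mul_r, one_mul, zero_add]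
      rfl
  have h2 : θhom (χ2 b) = (1, b) := by
    rcases b with j | j
    · exact θ_t2 (zi j)
    · show θhom (s 1 * t2 ^ zi j) = _
      rw [map_mul, θ_s, θ_t2]
      show ((1, sr 0) : D × D) * (1, r (zi j)) = _
      erw [Prod.mk_mul_mk, sr_mul_r, one_mul, zero_add]
      rfl
  rw [h1, h2, Prod.mk_mul_mk, mul_one, one_mul]

lemma χθ : χ.comp θhom = MonoidHom.id W := by
  apply cs.ext_simple
  intro i
  rw [MonoidHom.comp_apply, MonoidHom.id_apply]
  show χ (θhom (s i)) = s i
  rw [θ_s]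
  fin_cases i
  · show χ1 (sr 0) * χ2 1 = s 0
    rw [map_one, mul_one]
    show s 0 * t1 ^ (zi 0) = s 0
    rw [zi_zero, zpow_zero, mul_one]
  · show χ1 1 * χ2 (sr 0) = s 1
    rw [map_one, one_mul]
    show s 1 * t2 ^ (zi 0) = s 1
    rw [zi_zero, zpow_zero, mul_one]
  · show χ1 (sr 1) * χ2 1 = s 2
    rw [map_one, mul_one]
    show s 0 * t1 ^ (zi 1) = s 2
    rw [zi_one, zpow_one, t1, ← mul_assoc, ss 0, one_mul]
  · show χ1 1 * χ2 (sr 1) = s 3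
    rw [map_one, one_mul]
    show s 1 * t2 ^ (zi 1) = s 3
    rw [zi_one, zpow_one, t2, ← mul_assoc, ss 1, one_mul]

def θmul : W ≃* D × D := MonoidHom.toMulEquiv θhom χ χθ θχ

abbrev A : Type := Multiplicative (ZMod 2 × ZMod 2 × ZMod 2)

def c2 (k : ℤ) : ZMod 2 := (k : ZMod 2)

def π1fun : D → ZMod 2 × ZMod 2 × ZMod 2
  | r i => (c2 (zi i), 0, c2 (zi i))
  | sr i => (c2 (zi i + 1), 0, c2 (zi i))

def π2fun : D → ZMod 2 × ZMod 2 × ZMod 2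
  | r i => (c2 (zi i), 0, c2 (zi i))
  | sr i => (c2 (zi i), c2 1, c2 (zi i))

lemma neg_z2 (x : ZMod 2) : -x = x := by revert x; decide
lemma two_z2 : (2 : ZMod 2) = 0 := by decide

lemma π1fun_mul (a b : D) : π1fun (a * b) = π1fun a + π1fun b := by
  rcases a with i | i <;> rcases b with j | j <;>
    simp only [r_mul_r, r_mul_sr, sr_mul_r, sr_mul_sr, π1fun, zi_add, zi_sub,
      Prod.mk_add_mk, Prod.mk.injEq] <;>
    refine ⟨?_, ?_, ?_⟩ <;>
    (try unfold c2) <;> (try push_cast) <;>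
    (first
      | decide
      | (generalize ((zi i : ℤ) : ZMod 2) = x; revert x; decide)
      | (generalize ((zi j : ℤ) : ZMod 2) = y; revert y; decide)
      | (generalize ((zi i : ℤ) : ZMod 2) = x; generalize ((zi j : ℤ) : ZMod 2) = y;
         revert x y; decide))

lemma π2fun_mul (a b : D) : π2fun (a * b) = π2fun a + π2fun b := by
  rcases a with i | i <;> rcases b with j | j <;>
    simp only [r_mul_r, r_mul_sr, sr_mul_r, sr_mul_sr, π2fun, zi_add, zi_sub,
      Prod.mk_add_mk, Prod.mk.injEq] <;>
    refine ⟨?_, ?_, ?_⟩ <;>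
    (try unfold c2) <;> (try push_cast) <;>
    (first
      | decide
      | (generalize ((zi i : ℤ) : ZMod 2) = x; revert x; decide)
      | (generalize ((zi j : ℤ) : ZMod 2) = y; revert y; decide)
      | (generalize ((zi i : ℤ) : ZMod 2) = x; generalize ((zi j : ℤ) : ZMod 2) = y;
         revert x y; decide))

def π1 : D →* A := MonoidHom.mk' (fun d => Multiplicative.ofAdd (π1fun d))
  (by intro a b
      show (Multiplicative.ofAdd (π1fun (a * b)) : A) =
        Multiplicative.ofAdd (π1fun a) * Multiplicative.ofAdd (π1fun b)
      rw [π1fun_mul, ofAdd_add])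

def π2 : D →* A := MonoidHom.mk' (fun d => Multiplicative.ofAdd (π2fun d))
  (by intro a b
      show (Multiplicative.ofAdd (π2fun (a * b)) : A) =
        Multiplicative.ofAdd (π2fun a) * Multiplicative.ofAdd (π2fun b)
      rw [π2fun_mul, ofAdd_add])

def πD : D × D →* A := π1.coprod π2

def φ0 : W →* A := πD.comp θhom

lemma φ0_vals : φ0 (s 0) = Multiplicative.ofAdd e1 ∧ φ0 (s 1) = Multiplicative.ofAdd e2 ∧
    φ0 (s 2) = Multiplicative.ofAdd e3 ∧ φ0 (s 3) = Multiplicative.ofAdd (e1 + e2 + e3) := by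
  refine ⟨?_, ?_, ?_, ?_⟩ <;>
  · rw [φ0, MonoidHom.comp_apply, θ_s]
    decide

def ψfun : Multiplicative (ℤ × ℤ) → D × D :=
  fun p => (r (p.toAdd.1 + p.toAdd.2 : ℤ), r (p.toAdd.1 - p.toAdd.2 : ℤ))

lemma ψfun_mul (p q : Multiplicative (ℤ × ℤ)) : ψfun (p * q) = ψfun p * ψfun q := by
  unfold ψfun
  erw [toAdd_mul, Prod.mk_mul_mk, r_mul_r, r_mul_r]
  have h1 : ((p.toAdd + q.toAdd).1 : ℤ) = p.toAdd.1 + q.toAdd.1 := rfl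
  have h2 : ((p.toAdd + q.toAdd).2 : ℤ) = p.toAdd.2 + q.toAdd.2 := rfl
  rw [h1, h2]
  rw [Prod.mk.injEq]
  constructor
  · congr 1; exact (by intro a b c d; ring : ∀ a b c d : ℤ, a + c + (b + d) = a + b + (c + d)) _ _ _ _
  · congr 1; exact (by intro a b c d; ring : ∀ a b c d : ℤ, a + c - (b + d) = a - b + (c - d)) _ _ _ _

def ψZ : Multiplicative (ℤ × ℤ) →* D × D := MonoidHom.mk' ψfun ψfun_mul

lemma ψZ_inj : Function.Injective ψZ := by
  rw [injective_iff_map_eq_one]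
  intro p hp
  have h1 : ψfun p = 1 := hp
  unfold ψfun at h1
  rw [Prod.ext_iff] at h1
  simp only [Prod.fst_one, Prod.snd_one, one_def] at h1
  obtain ⟨ha', hb'⟩ := h1
  have h1' : (p.toAdd.1 + p.toAdd.2 : ℤ) = 0 := by injection ha'
  have h2' : (p.toAdd.1 - p.toAdd.2 : ℤ) = 0 := by injection hb'
  have hx : p.toAdd.1 = 0 := by omega
  have hy : p.toAdd.2 = 0 := by omega
  have : p.toAdd = (0, 0) := Prod.ext hx hy
  calc p = Multiplicative.ofAdd p.toAdd := rfl
  _ = Multiplicative.ofAdd ((0 : ℤ), (0 : ℤ)) := by rw [this]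
  _ = 1 := rfl

lemma πD_apply (x y : D) : πD (x, y) = Multiplicative.ofAdd (π1fun x + π2fun y) := by
  show π1 x * π2 y = _
  rfl

lemma ker_πD : πD.ker = ψZ.range := by
  ext z
  obtain ⟨x, y⟩ := z
  rw [MonoidHom.mem_ker, MonoidHom.mem_range]
  constructor
  · intro h
    rw [πD_apply] at h
    have h0 : π1fun x + π2fun y = 0 := h
    rcases x with i | i <;> rcases y with j | j <;>
      simp only [π1fun, π2fun, Prod.mk_add_mk, Prod.ext_iff, Prod.fst_zero, Prod.snd_zero] at h0
    · -- (r i, r j) case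
      obtain ⟨h1, h2, h3⟩ := h0
      have hdvd : (2 : ℤ) ∣ (zi i + zi j) := by
        have : ((zi i + zi j : ℤ) : ZMod 2) = 0 := by
          push_cast
          unfold c2 at h1
          exact h1
        exact (ZMod.intCast_zmod_eq_zero_iff_dvd _ 2).mp this
      obtain ⟨k, hk⟩ := hdvd
      refine ⟨Multiplicative.ofAdd (k, zi i - k), ?_⟩
      show (r (k + (zi i - k) : ℤ), r (k - (zi i - k) : ℤ)) = (r i, r j)
      rw [Prod.mk.injEq]
      constructor
      · congr 1
        show k + (zi i - k) = zi i
        ring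
      · congr 1
        show k - (zi i - k) = zi j
        omega
    · exfalso
      obtain ⟨h1, h2, h3⟩ := h0
      unfold c2 at h2
      simp at h2
    · exfalso
      obtain ⟨h1, h2, h3⟩ := h0
      unfold c2 at h1 h3
      push_cast at h1 h3
      rw [add_right_comm, h3, zero_add] at h1
      exact one_ne_zero h1
    · exfalso
      obtain ⟨h1, h2, h3⟩ := h0
      unfold c2 at h2
      simp at h2
  · rintro ⟨p, hp⟩
    rw [← hp]
    show πD (ψfun p) = 1
    unfold ψfun
    rw [πD_apply]
    have : π1fun (r (p.toAdd.1 + p.toAdd.2 : ℤ)) + π2fun (r (p.toAdd.1 - p.toAdd.2 : ℤ)) = 0 := by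
      simp only [π1fun, π2fun, Prod.mk_add_mk, Prod.ext_iff]
      have hz1 : zi (p.toAdd.1 + p.toAdd.2 : ℤ) = p.toAdd.1 + p.toAdd.2 := rfl
      have hz2 : zi (p.toAdd.1 - p.toAdd.2 : ℤ) = p.toAdd.1 - p.toAdd.2 := rfl
      rw [hz1, hz2]
      refine ⟨?_, ?_, ?_⟩
      · show c2 _ + c2 _ = 0
        unfold c2
        push_cast
        rw [sub_eq_add_neg, neg_z2 ((p.toAdd.2 : ℤ) : ZMod 2)]
        generalize ((p.toAdd.1 : ℤ) : ZMod 2) = x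
        generalize ((p.toAdd.2 : ℤ) : ZMod 2) = y
        revert x y
        decide
      · show (0 : ZMod 2) + 0 = 0
        rw [add_zero]
      · show c2 _ + c2 _ = 0
        unfold c2
        push_cast
        rw [sub_eq_add_neg, neg_z2 ((p.toAdd.2 : ℤ) : ZMod 2)]
        generalize ((p.toAdd.1 : ℤ) : ZMod 2) = x
        generalize ((p.toAdd.2 : ℤ) : ZMod 2) = y
        revert x y
        decide
    rw [this]
    rfl

lemma φ0_ker : φ0.ker = ψZ.range.map (θmul.symm : D × D →* W) := by
  have h1 : φ0.ker = πD.ker.comap θhom := (MonoidHom.comap_ker πD θhom).symm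
  have h2 : πD.ker.comap θhom = ψZ.range.comap (θmul : W →* D × D) := by
    rw [ker_πD]; rfl
  rw [h1, h2, Subgroup.comap_equiv_eq_map_symm]


/-- There is a unique group homomorphism `φ : W → (ZMod 2)³` with `φ(s₁) = e₁`,
`φ(s₂) = e₂`, `φ(s₃) = e₃`, `φ(s₄) = e₁ + e₂ + e₃`; it is surjective and its kernel is
isomorphic to `ℤ × ℤ`. -/
theorem stmt7 :
    (∃! φ : W →* Multiplicative (ZMod 2 × ZMod 2 × ZMod 2),
      φ (s 0) = Multiplicative.ofAdd e1 ∧ φ (s 1) = Multiplicative.ofAdd e2 ∧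
      φ (s 2) = Multiplicative.ofAdd e3 ∧ φ (s 3) = Multiplicative.ofAdd (e1 + e2 + e3)) ∧
    ∀ φ : W →* Multiplicative (ZMod 2 × ZMod 2 × ZMod 2),
      (φ (s 0) = Multiplicative.ofAdd e1 ∧ φ (s 1) = Multiplicative.ofAdd e2 ∧
       φ (s 2) = Multiplicative.ofAdd e3 ∧ φ (s 3) = Multiplicative.ofAdd (e1 + e2 + e3)) →
      Function.Surjective φ ∧ Nonempty (φ.ker ≃* Multiplicative (ℤ × ℤ)) := by
  obtain ⟨v0, v1, v2, v3⟩ := φ0_vals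
  have huniq : ∀ ψ : W →* A,
      (ψ (s 0) = Multiplicative.ofAdd e1 ∧ ψ (s 1) = Multiplicative.ofAdd e2 ∧
       ψ (s 2) = Multiplicative.ofAdd e3 ∧ ψ (s 3) = Multiplicative.ofAdd (e1 + e2 + e3)) →
      ψ = φ0 := by
    rintro ψ ⟨h0, h1, h2, h3⟩
    apply cs.ext_simple
    intro i
    fin_cases i
    · exact h0.trans v0.symm
    · exact h1.trans v1.symm
    · exact h2.trans v2.symm
    · exact h3.trans v3.symm
  constructor
  · exact ⟨φ0, ⟨v0, v1, v2, v3⟩, huniq⟩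
  · intro φ hv
    have hφ : φ = φ0 := huniq φ hv
    subst hφ
    constructor
    · intro x
      have hx : Multiplicative.ofAdd x.toAdd = x := rfl
      rw [← hx]
      rcases hxa : x.toAdd with ⟨a, b, c⟩
      fin_cases a <;> fin_cases b <;> fin_cases c
      · exact ⟨1, by rw [map_one]; rfl⟩
      · exact ⟨s 2, by rw [v2]; rfl⟩
      · exact ⟨s 1, by rw [v1]; rfl⟩
      · exact ⟨s 1 * s 2, by rw [map_mul, v1, v2]; rfl⟩
      · exact ⟨s 0, by rw [v0]; rfl⟩
      · exact ⟨s 0 * s 2, by rw [map_mul, v0, v2]; rfl⟩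
      · exact ⟨s 0 * s 1, by rw [map_mul, v0, v1]; rfl⟩
      · exact ⟨s 3, by rw [v3]; rfl⟩
    · exact ⟨((MulEquiv.subgroupCongr φ0_ker).trans
        (θmul.symm.subgroupMap ψZ.range).symm).trans
        (MonoidHom.ofInjective ψZ_inj).symm⟩
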